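/- For the equally likely ensemble S₁ = {|01⟩, |10⟩, (|00⟩+|11⟩)/√2, (|00⟩−|11⟩)/√2} in ℂ²⊗ℂ², the optimal separable success probability and the separable fidelity both equal 3/4, attained by measuring in the computational basis. -/

import Mathlib

open Matrix
open scoped BigOperators ComplexOrder

noncomputable section

/-- Product vector `|a⟩⊗|b⟩`. -/
def prodv {d₁ d₂ : ℕ} (a : Fin d₁ → ℂ) (b : Fin d₂ → ℂ) : Fin d₁ × Fin d₂ → ℂ :=
  fun y => a y.1 * b y.2

/-- Separable-fidelity set; its supremum is the separable fidelity `F_S`. -/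
def sepFidSet {d₁ d₂ : ℕ} (N : ℕ) (p : Fin N → ℝ)
    (ψ : Fin N → (Fin d₁ × Fin d₂ → ℂ)) : Set ℝ :=
  {x : ℝ | ∃ (A : ℕ) (m : Fin A → ℝ) (χ₁ : Fin A → Fin d₁ → ℂ)
      (χ₂ : Fin A → Fin d₂ → ℂ) (φ : Fin A → (Fin d₁ × Fin d₂ → ℂ)),
    (∀ a, 0 < m a) ∧ (∀ a, star (φ a) ⬝ᵥ φ a = 1) ∧
    (∑ a, (m a : ℂ) • Matrix.vecMulVec (prodv (χ₁ a) (χ₂ a))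
        (star (prodv (χ₁ a) (χ₂ a))) = 1) ∧
    x = ∑ a, ∑ i, p i * m a *
          (‖(star (ψ i) ⬝ᵥ prodv (χ₁ a) (χ₂ a))‖)^2 *
          (‖(star (ψ i) ⬝ᵥ φ a)‖)^2}

/-- Separable success-probability set; its supremum is `P_s(S)`. -/
def sepPsSet {d₁ d₂ : ℕ} (N : ℕ) (p : Fin N → ℝ)
    (ψ : Fin N → (Fin d₁ × Fin d₂ → ℂ)) : Set ℝ :=
  {x : ℝ | ∃ (A : ℕ) (m : Fin A → ℝ) (χ₁ : Fin A → Fin d₁ → ℂ)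
      (χ₂ : Fin A → Fin d₂ → ℂ) (G : Fin A → Fin N),
    (∀ a, 0 < m a) ∧
    (∑ a, (m a : ℂ) • Matrix.vecMulVec (prodv (χ₁ a) (χ₂ a))
        (star (prodv (χ₁ a) (χ₂ a))) = 1) ∧
    x = ∑ a, p (G a) * m a *
          (‖(star (ψ (G a)) ⬝ᵥ prodv (χ₁ a) (χ₂ a))‖)^2}

/-- The ensemble `S₁ = {|01⟩, |10⟩, (|00⟩+|11⟩)/√2, (|00⟩−|11⟩)/√2}` in `ℂ²⊗ℂ²`. -/
def S₁ : Fin 4 → (Fin 2 × Fin 2 → ℂ) :=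
  ![fun y => if y = (0, 1) then 1 else 0,
    fun y => if y = (1, 0) then 1 else 0,
    fun y => if y = (0, 0) then ((Real.sqrt 2)⁻¹ : ℂ)
             else if y = (1, 1) then ((Real.sqrt 2)⁻¹ : ℂ) else 0,
    fun y => if y = (0, 0) then ((Real.sqrt 2)⁻¹ : ℂ)
             else if y = (1, 1) then -((Real.sqrt 2)⁻¹ : ℂ) else 0]

lemma sqrt2_sq : (Real.sqrt 2) * Real.sqrt 2 = 2 := Real.mul_self_sqrt (by norm_num)

lemma sqrt2C : (((Real.sqrt 2)⁻¹ : ℝ) : ℂ) * (((Real.sqrt 2)⁻¹ : ℝ) : ℂ) = 1/2 := by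
  push_cast
  rw [← mul_inv]
  norm_cast
  rw [sqrt2_sq]
  norm_num

lemma sqrt2Csq : (((Real.sqrt 2) : ℝ) : ℂ)^2 = 2 := by
  norm_cast
  rw [sq, sqrt2_sq]

lemma abs_sqrt2 : ‖(((Real.sqrt 2)⁻¹ : ℝ) : ℂ)‖ = (Real.sqrt 2)⁻¹ := by
  rw [Complex.norm_real, Real.norm_eq_abs, abs_of_nonneg]
  positivity

lemma dot0 (χ₁ χ₂ : Fin 2 → ℂ) : star (S₁ 0) ⬝ᵥ prodv χ₁ χ₂ = χ₁ 0 * χ₂ 1 := by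
  simp [S₁, dotProduct, prodv, Fintype.sum_prod_type, Fin.sum_univ_two, Prod.ext_iff]

lemma dot1 (χ₁ χ₂ : Fin 2 → ℂ) : star (S₁ 1) ⬝ᵥ prodv χ₁ χ₂ = χ₁ 1 * χ₂ 0 := by
  simp [S₁, dotProduct, prodv, Fintype.sum_prod_type, Fin.sum_univ_two, Prod.ext_iff]

lemma dot2 (χ₁ χ₂ : Fin 2 → ℂ) : star (S₁ 2) ⬝ᵥ prodv χ₁ χ₂
    = (((Real.sqrt 2)⁻¹ : ℝ) : ℂ) * (χ₁ 0 * χ₂ 0 + χ₁ 1 * χ₂ 1) := by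
  simp [S₁, dotProduct, prodv, Fintype.sum_prod_type, Fin.sum_univ_two, Prod.ext_iff]
  ring

lemma dot3 (χ₁ χ₂ : Fin 2 → ℂ) : star (S₁ 3) ⬝ᵥ prodv χ₁ χ₂
    = (((Real.sqrt 2)⁻¹ : ℝ) : ℂ) * (χ₁ 0 * χ₂ 0 - χ₁ 1 * χ₂ 1) := by
  simp [S₁, dotProduct, prodv, Fintype.sum_prod_type, Fin.sum_univ_two, Prod.ext_iff]
  ring

lemma orthS (i j : Fin 4) : star (S₁ i) ⬝ᵥ S₁ j = if i = j then 1 else 0 := by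
  fin_cases i <;> fin_cases j <;>
    simp [S₁, dotProduct, Fintype.sum_prod_type, Fin.sum_univ_two, Prod.ext_iff,
      sqrt2C] <;> ring_nf <;> simp [inv_pow, sqrt2Csq] <;> norm_num

lemma complS : ∑ i : Fin 4, Matrix.vecMulVec (S₁ i) (star (S₁ i)) = 1 := by
  ext ⟨y1, y2⟩ ⟨z1, z2⟩
  fin_cases y1 <;> fin_cases y2 <;> fin_cases z1 <;> fin_cases z2 <;>
    simp [S₁, Matrix.vecMulVec_apply, Fin.sum_univ_four, Matrix.one_apply, Prod.ext_iff,
      sqrt2C] <;> ring_nf <;> simp [inv_pow, sqrt2Csq] <;> norm_num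

def lamInv : Fin 4 → ℝ := ![1, 1, 2, 2]

lemma schmidt (i : Fin 4) (χ₁ χ₂ : Fin 2 → ℂ) :
    lamInv i * (‖star (S₁ i) ⬝ᵥ prodv χ₁ χ₂‖)^2
      ≤ (∑ j, (‖χ₁ j‖)^2) * (∑ k, (‖χ₂ k‖)^2) := by
  have ha0 := norm_nonneg (χ₁ 0)
  have ha1 := norm_nonneg (χ₁ 1)
  have hb0 := norm_nonneg (χ₂ 0)
  have hb1 := norm_nonneg (χ₂ 1)
  fin_cases i
  · rw [show ((⟨0, by norm_num⟩ : Fin 4)) = 0 from rfl, dot0]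
    simp only [lamInv, Fin.sum_univ_two, norm_mul, Matrix.cons_val_zero, one_mul, mul_pow]
    nlinarith [sq_nonneg (‖χ₁ 0‖ * ‖χ₂ 0‖),
      sq_nonneg (‖χ₁ 1‖ * ‖χ₂ 0‖),
      sq_nonneg (‖χ₁ 1‖ * ‖χ₂ 1‖)]
  · rw [show ((⟨1, by norm_num⟩ : Fin 4)) = 1 from rfl, dot1]
    simp only [lamInv, Fin.sum_univ_two, norm_mul, Matrix.cons_val_one, Matrix.head_cons,
      Matrix.cons_val_zero, one_mul, mul_pow]
    nlinarith [sq_nonneg (‖χ₁ 0‖ * ‖χ₂ 0‖),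
      sq_nonneg (‖χ₁ 0‖ * ‖χ₂ 1‖),
      sq_nonneg (‖χ₁ 1‖ * ‖χ₂ 1‖)]
  · rw [show ((⟨2, by norm_num⟩ : Fin 4)) = 2 from rfl, dot2]
    have habs : ‖(((Real.sqrt 2)⁻¹ : ℝ) : ℂ) * (χ₁ 0 * χ₂ 0 + χ₁ 1 * χ₂ 1)‖
        ≤ (Real.sqrt 2)⁻¹ * (‖χ₁ 0‖ * ‖χ₂ 0‖
            + ‖χ₁ 1‖ * ‖χ₂ 1‖) := by
      rw [norm_mul, abs_sqrt2]
      gcongr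
      calc ‖χ₁ 0 * χ₂ 0 + χ₁ 1 * χ₂ 1‖
          ≤ ‖χ₁ 0 * χ₂ 0‖ + ‖χ₁ 1 * χ₂ 1‖ := norm_add_le _ _
        _ = _ := by rw [norm_mul, norm_mul]
    have h1 : (‖(((Real.sqrt 2)⁻¹ : ℝ) : ℂ) * (χ₁ 0 * χ₂ 0 + χ₁ 1 * χ₂ 1)‖)^2
        ≤ ((Real.sqrt 2)⁻¹)^2 * (‖χ₁ 0‖ * ‖χ₂ 0‖
            + ‖χ₁ 1‖ * ‖χ₂ 1‖)^2 := by
      rw [← mul_pow]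
      exact pow_le_pow_left₀ (norm_nonneg _) habs 2
    have hs : ((Real.sqrt 2)⁻¹)^2 = (2:ℝ)⁻¹ := by
      rw [inv_pow, sq, sqrt2_sq]
    rw [hs] at h1
    simp only [lamInv, Fin.sum_univ_two]
    show (2:ℝ) * _ ≤ _
    nlinarith [sq_nonneg (‖χ₁ 0‖ * ‖χ₂ 1‖
      - ‖χ₁ 1‖ * ‖χ₂ 0‖)]
  · rw [show ((⟨3, by norm_num⟩ : Fin 4)) = 3 from rfl, dot3]
    have habs : ‖(((Real.sqrt 2)⁻¹ : ℝ) : ℂ) * (χ₁ 0 * χ₂ 0 - χ₁ 1 * χ₂ 1)‖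
        ≤ (Real.sqrt 2)⁻¹ * (‖χ₁ 0‖ * ‖χ₂ 0‖
            + ‖χ₁ 1‖ * ‖χ₂ 1‖) := by
      rw [norm_mul, abs_sqrt2]
      gcongr
      calc ‖χ₁ 0 * χ₂ 0 - χ₁ 1 * χ₂ 1‖
          ≤ ‖χ₁ 0 * χ₂ 0‖ + ‖χ₁ 1 * χ₂ 1‖ := by simpa using norm_sub_le (χ₁ 0 * χ₂ 0) (χ₁ 1 * χ₂ 1)
        _ = _ := by rw [norm_mul, norm_mul]
    have h1 : (‖(((Real.sqrt 2)⁻¹ : ℝ) : ℂ) * (χ₁ 0 * χ₂ 0 - χ₁ 1 * χ₂ 1)‖)^2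
        ≤ ((Real.sqrt 2)⁻¹)^2 * (‖χ₁ 0‖ * ‖χ₂ 0‖
            + ‖χ₁ 1‖ * ‖χ₂ 1‖)^2 := by
      rw [← mul_pow]
      exact pow_le_pow_left₀ (norm_nonneg _) habs 2
    have hs : ((Real.sqrt 2)⁻¹)^2 = (2:ℝ)⁻¹ := by
      rw [inv_pow, sq, sqrt2_sq]
    rw [hs] at h1
    simp only [lamInv, Fin.sum_univ_two]
    show (2:ℝ) * _ ≤ _
    nlinarith [sq_nonneg (‖χ₁ 0‖ * ‖χ₂ 1‖
      - ‖χ₁ 1‖ * ‖χ₂ 0‖)]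
variable {n : Type*} [Fintype n] [DecidableEq n]

lemma sand {A : ℕ} (m : Fin A → ℝ) (v : Fin A → (n → ℂ))
    (h : ∑ a, (m a : ℂ) • Matrix.vecMulVec (v a) (star (v a)) = 1) (w : n → ℂ) :
    ∑ a, (m a : ℂ) * ((star w ⬝ᵥ v a) * (starRingEnd ℂ) (star w ⬝ᵥ v a)) = star w ⬝ᵥ w := by
  have h2 := congrArg (fun M : Matrix n n ℂ => star w ⬝ᵥ M *ᵥ w) h
  simp only [Matrix.mulVec, dotProduct, Matrix.one_apply, Matrix.sum_apply,
    Matrix.smul_apply, Matrix.vecMulVec_apply, Pi.star_apply, smul_eq_mul,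
    Finset.mul_sum, Finset.sum_mul, mul_ite, ite_mul, mul_zero, zero_mul, mul_one,
    Finset.sum_ite_eq', Finset.sum_ite_eq, Finset.mem_univ, if_true, one_mul] at h2
  calc ∑ a, (m a : ℂ) * ((star w ⬝ᵥ v a) * (starRingEnd ℂ) (star w ⬝ᵥ v a))
      = ∑ a : Fin A, ∑ x : n, ∑ x1 : n,
          star (w x) * ((m a : ℂ) * (v a x * star (v a x1)) * w x1) := by
        refine Finset.sum_congr rfl fun a _ => ?_
        simp only [dotProduct, Pi.star_apply, map_sum, Complex.star_def]
        rw [Finset.sum_mul_sum]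
        simp only [Finset.mul_sum]
        refine Finset.sum_congr rfl fun x _ => Finset.sum_congr rfl fun x1 _ => by
          simp only [_root_.map_mul, Complex.conj_conj]; ring
    _ = ∑ x : n, ∑ x1 : n, ∑ a : Fin A,
          star (w x) * ((m a : ℂ) * (v a x * star (v a x1)) * w x1) := by
        rw [Finset.sum_comm]
        exact Finset.sum_congr rfl fun x _ => by rw [Finset.sum_comm]
    _ = star w ⬝ᵥ w := by rw [h2]; rfl

lemma sandR {A : ℕ} (m : Fin A → ℝ) (v : Fin A → (n → ℂ))
    (h : ∑ a, (m a : ℂ) • Matrix.vecMulVec (v a) (star (v a)) = 1) (w : n → ℂ)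
    (c : ℝ) (hw : star w ⬝ᵥ w = (c : ℂ)) :
    ∑ a, m a * (‖star w ⬝ᵥ v a‖)^2 = c := by
  have h1 := sand m v h w
  rw [hw] at h1
  simp only [Complex.mul_conj, Complex.normSq_eq_norm_sq] at h1
  exact_mod_cast h1

lemma traceEq {A : ℕ} (m : Fin A → ℝ) (v : Fin A → (n → ℂ))
    (h : ∑ a, (m a : ℂ) • Matrix.vecMulVec (v a) (star (v a)) = 1) :
    ∑ a, ∑ y : n, m a * (‖v a y‖)^2 = Fintype.card n := by
  have h2 := congrArg Matrix.trace h
  rw [Matrix.trace_sum, Matrix.trace_one] at h2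
  simp only [Matrix.trace_smul, Matrix.trace, Matrix.diag, Matrix.smul_apply, Finset.mul_sum, Matrix.vecMulVec_apply,
    Pi.star_apply, smul_eq_mul, Complex.star_def, Complex.mul_conj,
    Complex.normSq_eq_norm_sq] at h2
  exact_mod_cast h2

lemma prodNorm (χ₁ χ₂ : Fin 2 → ℂ) :
    ∑ y : Fin 2 × Fin 2, (‖prodv χ₁ χ₂ y‖)^2
      = (∑ j, (‖χ₁ j‖)^2) * (∑ k, (‖χ₂ k‖)^2) := by
  rw [Fintype.sum_prod_type, Finset.sum_mul_sum]
  exact Finset.sum_congr rfl fun j _ => Finset.sum_congr rfl fun k _ => by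
    simp [prodv, norm_mul, mul_pow]

lemma core {A : ℕ} (m : Fin A → ℝ) (χ₁ χ₂ : Fin A → Fin 2 → ℂ) (G : Fin A → Fin 4)
    (hm : ∀ a, 0 < m a)
    (hc : ∑ a, (m a : ℂ) • Matrix.vecMulVec (prodv (χ₁ a) (χ₂ a))
        (star (prodv (χ₁ a) (χ₂ a))) = 1) :
    ∑ a, m a * (‖star (S₁ (G a)) ⬝ᵥ prodv (χ₁ a) (χ₂ a)‖)^2 ≤ 3 := by
  set v : Fin A → (Fin 2 × Fin 2 → ℂ) := fun a => prodv (χ₁ a) (χ₂ a) with hv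
  have q : ∀ (i : Fin 4) (a : Fin A), ℝ := fun i a => m a * (‖star (S₁ i) ⬝ᵥ v a‖)^2
  -- unit bounds
  have unit : ∀ i : Fin 4, ∑ a, m a * (‖star (S₁ i) ⬝ᵥ v a‖)^2 = 1 := by
    intro i
    exact sandR m v hc (S₁ i) 1 (by rw [orthS i i]; simp)
  have qnonneg : ∀ (i : Fin 4) (a : Fin A), 0 ≤ m a * (‖star (S₁ i) ⬝ᵥ v a‖)^2 :=
    fun i a => mul_nonneg (hm a).le (sq_nonneg _)
  -- u i ≤ 1
  have ubd : ∀ i : Fin 4,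
      ∑ a, (if G a = i then m a * (‖star (S₁ (G a)) ⬝ᵥ v a‖)^2 else 0) ≤ 1 := by
    intro i
    calc ∑ a, (if G a = i then m a * (‖star (S₁ (G a)) ⬝ᵥ v a‖)^2 else 0)
        ≤ ∑ a, m a * (‖star (S₁ i) ⬝ᵥ v a‖)^2 := by
          refine Finset.sum_le_sum fun a _ => ?_
          by_cases h : G a = i
          · rw [if_pos h, h]
          · rw [if_neg h]; exact qnonneg i a
      _ = 1 := unit i
  -- trace constraint
  have htr : ∑ a, ∑ y : Fin 2 × Fin 2, m a * (‖v a y‖)^2 = 4 := by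
    have := traceEq m v hc
    simpa using this
  have constr : ∑ a, lamInv (G a) * (m a * (‖star (S₁ (G a)) ⬝ᵥ v a‖)^2) ≤ 4 := by
    calc ∑ a, lamInv (G a) * (m a * (‖star (S₁ (G a)) ⬝ᵥ v a‖)^2)
        ≤ ∑ a, ∑ y : Fin 2 × Fin 2, m a * (‖v a y‖)^2 := by
          refine Finset.sum_le_sum fun a _ => ?_
          rw [← Finset.mul_sum, prodNorm]
          rw [mul_left_comm]
          exact mul_le_mul_of_nonneg_left (schmidt (G a) (χ₁ a) (χ₂ a)) (hm a).le
      _ = 4 := htr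
  -- decomposition identity
  have iden : ∀ a, m a * (‖star (S₁ (G a)) ⬝ᵥ v a‖)^2
      = (1/2) * (lamInv (G a) * (m a * (‖star (S₁ (G a)) ⬝ᵥ v a‖)^2))
        + (1/2) * (if G a = 0 then m a * (‖star (S₁ (G a)) ⬝ᵥ v a‖)^2 else 0)
        + (1/2) * (if G a = 1 then m a * (‖star (S₁ (G a)) ⬝ᵥ v a‖)^2 else 0) := by
    intro a
    have h4 : G a = 0 ∨ G a = 1 ∨ G a = 2 ∨ G a = 3 := by omega
    rcases h4 with h | h | h | h <;> rw [h] <;> simp [lamInv] <;> ring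
  calc ∑ a, m a * (‖star (S₁ (G a)) ⬝ᵥ v a‖)^2
      = (1/2) * (∑ a, lamInv (G a) * (m a * (‖star (S₁ (G a)) ⬝ᵥ v a‖)^2))
        + (1/2) * (∑ a, if G a = 0 then m a * (‖star (S₁ (G a)) ⬝ᵥ v a‖)^2 else 0)
        + (1/2) * (∑ a, if G a = 1 then m a * (‖star (S₁ (G a)) ⬝ᵥ v a‖)^2 else 0) := by
        rw [Finset.mul_sum, Finset.mul_sum, Finset.mul_sum, ← Finset.sum_add_distrib,
          ← Finset.sum_add_distrib]
        exact Finset.sum_congr rfl fun a _ => iden a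
    _ ≤ (1/2) * 4 + (1/2) * 1 + (1/2) * 1 := by
        linarith [constr, ubd 0, ubd 1]
    _ = 3 := by norm_num

lemma dot_swap (u w : Fin 2 × Fin 2 → ℂ) :
    ‖star u ⬝ᵥ w‖ = ‖star w ⬝ᵥ u‖ := by
  rw [← Complex.norm_conj]
  congr 1
  simp only [dotProduct, map_sum, Pi.star_apply, Complex.star_def, _root_.map_mul,
    Complex.conj_conj]
  exact Finset.sum_congr rfl fun y _ => by ring

lemma unitD (φ : Fin 2 × Fin 2 → ℂ) (hφ : star φ ⬝ᵥ φ = 1) :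
    ∑ i : Fin 4, (‖star (S₁ i) ⬝ᵥ φ‖)^2 = 1 := by
  have hc : ∑ i : Fin 4, ((fun (_ : Fin 4) => (1:ℝ)) i : ℂ) •
      Matrix.vecMulVec (S₁ i) (star (S₁ i)) = 1 := by
    simpa using complS
  have := sandR (fun _ => (1:ℝ)) S₁ hc φ 1 (by rw [hφ]; norm_num)
  simp only [one_mul] at this
  rw [← this]
  exact Finset.sum_congr rfl fun i _ => by rw [dot_swap]

lemma orthAbs (i j : Fin 4) :
    (‖star (S₁ i) ⬝ᵥ S₁ j‖)^2 = if i = j then 1 else 0 := by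
  rw [orthS]
  split <;> simp

def e : Fin 2 → Fin 2 → ℂ := fun j k => if k = j then 1 else 0

def Mχ₁ : Fin 4 → Fin 2 → ℂ := ![e 0, e 0, e 1, e 1]
def Mχ₂ : Fin 4 → Fin 2 → ℂ := ![e 0, e 1, e 0, e 1]
def MG : Fin 4 → Fin 4 := ![2, 0, 1, 2]

lemma complM : ∑ a : Fin 4, (((fun (_ : Fin 4) => (1:ℝ)) a : ℝ) : ℂ) •
    Matrix.vecMulVec (prodv (Mχ₁ a) (Mχ₂ a)) (star (prodv (Mχ₁ a) (Mχ₂ a))) = 1 := by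
  ext ⟨y1, y2⟩ ⟨z1, z2⟩
  fin_cases y1 <;> fin_cases y2 <;> fin_cases z1 <;> fin_cases z2 <;>
    simp [Mχ₁, Mχ₂, e, prodv, Matrix.vecMulVec_apply, Fin.sum_univ_four, Matrix.one_apply,
      Prod.ext_iff]

lemma psval : ∑ a : Fin 4, (4:ℝ)⁻¹ * (1:ℝ) *
    (‖star (S₁ (MG a)) ⬝ᵥ prodv (Mχ₁ a) (Mχ₂ a)‖)^2 = 3/4 := by
  have h0 : star (S₁ (MG 0)) ⬝ᵥ prodv (Mχ₁ 0) (Mχ₂ 0) = (((Real.sqrt 2)⁻¹ : ℝ) : ℂ) := by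
    rw [show MG 0 = 2 from rfl, dot2]; simp [Mχ₁, Mχ₂, e]
  have h1 : star (S₁ (MG 1)) ⬝ᵥ prodv (Mχ₁ 1) (Mχ₂ 1) = 1 := by
    rw [show MG 1 = 0 from rfl, dot0]; simp [Mχ₁, Mχ₂, e]
  have h2 : star (S₁ (MG 2)) ⬝ᵥ prodv (Mχ₁ 2) (Mχ₂ 2) = 1 := by
    rw [show MG 2 = 1 from rfl, dot1]; simp [Mχ₁, Mχ₂, e]
  have h3 : star (S₁ (MG 3)) ⬝ᵥ prodv (Mχ₁ 3) (Mχ₂ 3) = (((Real.sqrt 2)⁻¹ : ℝ) : ℂ) := by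
    rw [show MG 3 = 2 from rfl, dot2]; simp [Mχ₁, Mχ₂, e, Matrix.vecHead, Matrix.vecTail]
  rw [Fin.sum_univ_four, h0, h1, h2, h3, abs_sqrt2]
  rw [inv_pow, sq, sqrt2_sq]
  norm_num

lemma supval (a : Fin 2 × Fin 2) (c : ℝ) (i0 : Fin 4)
    (hle : ∀ i : Fin 4, (4:ℝ)⁻¹ * (‖S₁ i a‖)^2 ≤ c)
    (heq : (4:ℝ)⁻¹ * (‖S₁ i0 a‖)^2 = c) :
    Finset.univ.sup' Finset.univ_nonempty
      (fun i : Fin 4 => (4:ℝ)⁻¹ * (‖S₁ i a‖)^2) = c :=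
  le_antisymm (Finset.sup'_le _ _ fun i _ => hle i)
    (heq ▸ Finset.le_sup' (fun i : Fin 4 => (4:ℝ)⁻¹ * (‖S₁ i a‖)^2)
      (Finset.mem_univ i0))

lemma sqhalf : (‖((((Real.sqrt 2) : ℝ) : ℂ))⁻¹‖)^2 = 1/2 := by
  rw [norm_inv, inv_pow, Complex.norm_real, Real.norm_eq_abs, abs_of_nonneg (Real.sqrt_nonneg 2), sq, sqrt2_sq]
  norm_num

/-- For the equally likely ensemble `S₁`, the optimal separable success probability
and the separable fidelity both equal `3/4`, and this value is attained by measuring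
in the computational basis with maximum-likelihood decoding. -/
theorem stmt19 :
    IsGreatest (sepPsSet 4 (fun _ => (4 : ℝ)⁻¹) S₁) (3 / 4) ∧
    IsGreatest (sepFidSet 4 (fun _ => (4 : ℝ)⁻¹) S₁) (3 / 4) ∧
    ∑ a : Fin 2 × Fin 2,
        (Finset.univ.sup' Finset.univ_nonempty
          fun i : Fin 4 => (4 : ℝ)⁻¹ * (‖S₁ i a‖)^2) = 3 / 4 := by
  refine ⟨⟨?_, ?_⟩, ⟨?_, ?_⟩, ?_⟩
  · -- Ps membership
    refine ⟨4, fun _ => 1, Mχ₁, Mχ₂, MG, fun a => one_pos, by simpa using complM, ?_⟩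
    simpa using psval.symm
  · -- Ps upper bound
    rintro x ⟨A, m, χ₁, χ₂, G, hm, hc, rfl⟩
    have h := core m χ₁ χ₂ G hm hc
    have goal_eq : (∑ a, (4:ℝ)⁻¹ * m a *
        (‖star (S₁ (G a)) ⬝ᵥ prodv (χ₁ a) (χ₂ a)‖)^2) ≤ 3/4 := by
      have e1 : (∑ a, (4:ℝ)⁻¹ * m a *
          (‖star (S₁ (G a)) ⬝ᵥ prodv (χ₁ a) (χ₂ a)‖)^2)
          = (4:ℝ)⁻¹ * ∑ a, m a *
            (‖star (S₁ (G a)) ⬝ᵥ prodv (χ₁ a) (χ₂ a)‖)^2 := by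
        rw [Finset.mul_sum]; exact Finset.sum_congr rfl fun a _ => by ring
      rw [e1]; linarith
    exact goal_eq
  · -- Fid membership
    refine ⟨4, fun _ => 1, Mχ₁, Mχ₂, fun a => S₁ (MG a), fun a => one_pos,
      fun a => by rw [orthS]; simp, by simpa using complM, ?_⟩
    have key : ∀ a : Fin 4, ∑ i : Fin 4, (4:ℝ)⁻¹ * (1:ℝ) *
        (‖star (S₁ i) ⬝ᵥ prodv (Mχ₁ a) (Mχ₂ a)‖)^2 *
        (‖star (S₁ i) ⬝ᵥ S₁ (MG a)‖)^2
        = (4:ℝ)⁻¹ * (1:ℝ) *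
          (‖star (S₁ (MG a)) ⬝ᵥ prodv (Mχ₁ a) (Mχ₂ a)‖)^2 := by
      intro a
      simp only [orthAbs, mul_ite, mul_one, mul_zero, Finset.sum_ite_eq',
        Finset.mem_univ, if_true]
    exact ((Finset.sum_congr rfl (fun a _ => key a)).trans psval).symm
  · -- Fid upper bound
    rintro x ⟨A, m, χ₁, χ₂, φ, hm, hφ, hc, rfl⟩
    have hex : ∀ a : Fin A, ∃ g : Fin 4, ∀ i : Fin 4,
        (‖star (S₁ i) ⬝ᵥ prodv (χ₁ a) (χ₂ a)‖)^2
          ≤ (‖star (S₁ g) ⬝ᵥ prodv (χ₁ a) (χ₂ a)‖)^2 := by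
      intro a
      obtain ⟨b, -, hb⟩ := Finset.exists_max_image Finset.univ
        (fun i : Fin 4 => (‖star (S₁ i) ⬝ᵥ prodv (χ₁ a) (χ₂ a)‖)^2)
        ⟨0, Finset.mem_univ 0⟩
      exact ⟨b, fun i => hb i (Finset.mem_univ i)⟩
    choose G hG using hex
    have hcore := core m χ₁ χ₂ G hm hc
    have goal_eq : (∑ a, ∑ i, (4:ℝ)⁻¹ * m a *
        (‖star (S₁ i) ⬝ᵥ prodv (χ₁ a) (χ₂ a)‖)^2 *
        (‖star (S₁ i) ⬝ᵥ φ a‖)^2) ≤ 3/4 := by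
      have step1 : ∀ a : Fin A, (∑ i : Fin 4, (4:ℝ)⁻¹ * m a *
          (‖star (S₁ i) ⬝ᵥ prodv (χ₁ a) (χ₂ a)‖)^2 *
          (‖star (S₁ i) ⬝ᵥ φ a‖)^2)
          ≤ (4:ℝ)⁻¹ * (m a *
            (‖star (S₁ (G a)) ⬝ᵥ prodv (χ₁ a) (χ₂ a)‖)^2) := by
        intro a
        calc (∑ i : Fin 4, (4:ℝ)⁻¹ * m a *
            (‖star (S₁ i) ⬝ᵥ prodv (χ₁ a) (χ₂ a)‖)^2 *
            (‖star (S₁ i) ⬝ᵥ φ a‖)^2)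
            ≤ ∑ i : Fin 4, (4:ℝ)⁻¹ * m a *
              (‖star (S₁ (G a)) ⬝ᵥ prodv (χ₁ a) (χ₂ a)‖)^2 *
              (‖star (S₁ i) ⬝ᵥ φ a‖)^2 := by
              refine Finset.sum_le_sum fun i _ => ?_
              refine mul_le_mul_of_nonneg_right ?_ (sq_nonneg _)
              exact mul_le_mul_of_nonneg_left (hG a i)
                (mul_nonneg (by norm_num) (hm a).le)
          _ = (4:ℝ)⁻¹ * m a *
              (‖star (S₁ (G a)) ⬝ᵥ prodv (χ₁ a) (χ₂ a)‖)^2 *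
              (∑ i : Fin 4, (‖star (S₁ i) ⬝ᵥ φ a‖)^2) := by
              rw [Finset.mul_sum]
          _ = (4:ℝ)⁻¹ * (m a *
              (‖star (S₁ (G a)) ⬝ᵥ prodv (χ₁ a) (χ₂ a)‖)^2) := by
              rw [unitD (φ a) (hφ a)]; ring
      calc (∑ a, ∑ i, (4:ℝ)⁻¹ * m a *
          (‖star (S₁ i) ⬝ᵥ prodv (χ₁ a) (χ₂ a)‖)^2 *
          (‖star (S₁ i) ⬝ᵥ φ a‖)^2)
          ≤ ∑ a, (4:ℝ)⁻¹ * (m a *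
            (‖star (S₁ (G a)) ⬝ᵥ prodv (χ₁ a) (χ₂ a)‖)^2) :=
            Finset.sum_le_sum fun a _ => step1 a
        _ = (4:ℝ)⁻¹ * ∑ a, m a *
            (‖star (S₁ (G a)) ⬝ᵥ prodv (χ₁ a) (χ₂ a)‖)^2 := by
            rw [Finset.mul_sum]
        _ ≤ 3/4 := by linarith
    exact goal_eq
  · -- computational-basis value
    simp only [Fintype.sum_prod_type, Fin.sum_univ_two]
    have e00 : Finset.univ.sup' Finset.univ_nonempty
        (fun i : Fin 4 => (4:ℝ)⁻¹ * (‖S₁ i ((0:Fin 2),(0:Fin 2))‖)^2) = 1/8 := by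
      refine supval _ _ 2 ?_ ?_
      · intro i; fin_cases i <;>
          simp [S₁, Prod.ext_iff, Matrix.vecHead, Matrix.vecTail, norm_neg, sqhalf] <;>
          norm_num [sqhalf]
      · simp [S₁, Prod.ext_iff, Matrix.vecHead, Matrix.vecTail, Matrix.cons_val_zero,
          Matrix.cons_val_one, Matrix.head_cons, norm_neg, sqhalf] <;>
        norm_num [sqhalf]
    have e01 : Finset.univ.sup' Finset.univ_nonempty
        (fun i : Fin 4 => (4:ℝ)⁻¹ * (‖S₁ i ((0:Fin 2),(1:Fin 2))‖)^2) = 1/4 := by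
      refine supval _ _ 0 ?_ ?_
      · intro i; fin_cases i <;>
          simp [S₁, Prod.ext_iff, Matrix.vecHead, Matrix.vecTail, norm_neg, sqhalf] <;>
          norm_num [sqhalf]
      · simp only [S₁, Prod.ext_iff, Matrix.vecHead, Matrix.vecTail, Matrix.cons_val_zero,
          Matrix.cons_val_one, Matrix.head_cons, norm_neg, sqhalf] <;>
        norm_num [sqhalf]
    have e10 : Finset.univ.sup' Finset.univ_nonempty
        (fun i : Fin 4 => (4:ℝ)⁻¹ * (‖S₁ i ((1:Fin 2),(0:Fin 2))‖)^2) = 1/4 := by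
      refine supval _ _ 1 ?_ ?_
      · intro i; fin_cases i <;>
          simp [S₁, Prod.ext_iff, Matrix.vecHead, Matrix.vecTail, norm_neg, sqhalf] <;>
          norm_num [sqhalf]
      · simp only [S₁, Prod.ext_iff, Matrix.vecHead, Matrix.vecTail, Matrix.cons_val_zero,
          Matrix.cons_val_one, Matrix.head_cons, norm_neg, sqhalf] <;>
        norm_num [sqhalf]
    have e11 : Finset.univ.sup' Finset.univ_nonempty
        (fun i : Fin 4 => (4:ℝ)⁻¹ * (‖S₁ i ((1:Fin 2),(1:Fin 2))‖)^2) = 1/8 := by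
      refine supval _ _ 2 ?_ ?_
      · intro i; fin_cases i <;>
          simp [S₁, Prod.ext_iff, Matrix.vecHead, Matrix.vecTail, norm_neg, sqhalf] <;>
          norm_num [sqhalf]
      · simp [S₁, Prod.ext_iff, Matrix.vecHead, Matrix.vecTail, Matrix.cons_val_zero,
          Matrix.cons_val_one, Matrix.head_cons, norm_neg, sqhalf] <;>
        norm_num [sqhalf]
    rw [e00, e01, e10, e11]
    norm_num
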